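/- arXiv:1912.13134 — 7 statements merged into one kernel-verified Lean document; each statement's English description precedes it below -/
import Mathlib

section
/- For all real numbers x, y with x > 0 and y > 0, the relative pressure satisfies the lower bound P(x|y) ≥ (1/2)·min{1/x, 1/y}·(x − y)². -/
open Real

private lemma auxA : ∀ s : ℝ, 0 < s → s ≤ 1 → (1 - s)^2 / 2 ≤ s - 1 - Real.log s := by
  intro s hs hs1
  set g : ℝ → ℝ := fun u => u - 1 - Real.log u - (1 - u)^2 / 2 with hg
  have key : AntitoneOn g (Set.Ioc (0:ℝ) 1) := by
    apply antitoneOn_of_deriv_nonpos (convex_Ioc 0 1)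
    · apply ContinuousOn.sub
      apply ContinuousOn.sub
      · exact (continuousOn_id.sub continuousOn_const)
      · exact Real.continuousOn_log.mono (fun u hu => ne_of_gt hu.1)
      · fun_prop
    · apply DifferentiableOn.sub
      apply DifferentiableOn.sub
      · exact (differentiable_id.sub (differentiable_const _)).differentiableOn
      · intro u hu
        rw [interior_Ioc] at hu
        exact (Real.differentiableAt_log (ne_of_gt hu.1)).differentiableWithinAt
      · fun_prop
    · intro u hu
      rw [interior_Ioc] at hu
      have hu0 : u ≠ 0 := ne_of_gt hu.1
      have hd : HasDerivAt g (1 - u⁻¹ - (u - 1)) u := by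
        have h1 : HasDerivAt (fun u : ℝ => u - 1 - Real.log u) (1 - u⁻¹) u :=
          ((hasDerivAt_id u).sub_const 1).sub (Real.hasDerivAt_log hu0)
        have h2 : HasDerivAt (fun u : ℝ => (1 - u)^2 / 2) (u - 1) u := by
          have h3 : HasDerivAt (fun u : ℝ => (1 - u)^2) (2 * (1 - u) ^ 1 * (0 - 1)) u :=
            ((hasDerivAt_const u (1:ℝ)).sub (hasDerivAt_id u)).pow 2
          have h4 := h3.div_const 2
          refine h4.congr_deriv ?_
          simp only [pow_one]; ring
        exact h1.sub h2
      rw [hd.deriv]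
      have he : 1 - u⁻¹ - (u - 1) = -((u-1)^2 / u) := by field_simp; try ring
      rw [he]
      have : (0:ℝ) ≤ (u-1)^2 / u := div_nonneg (sq_nonneg _) hu.1.le
      linarith
  have h1 : g 1 ≤ g s := key ⟨hs, hs1⟩ ⟨one_pos, le_refl 1⟩ hs1
  simp [hg, Real.log_one] at h1
  linarith

private lemma auxB : ∀ t : ℝ, 0 < t → t ≤ 1 → (t - 1)^2 / 2 ≤ t * Real.log t - t + 1 := by
  intro t ht ht1
  set h : ℝ → ℝ := fun u => u * Real.log u - u + 1 - (u - 1)^2 / 2 with hh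
  have key : AntitoneOn h (Set.Ioc (0:ℝ) 1) := by
    apply antitoneOn_of_deriv_nonpos (convex_Ioc 0 1)
    · apply ContinuousOn.sub
      apply ContinuousOn.add
      apply ContinuousOn.sub
      · exact continuousOn_id.mul (Real.continuousOn_log.mono (fun u hu => ne_of_gt hu.1))
      · exact continuousOn_id
      · exact continuousOn_const
      · fun_prop
    · intro u hu
      rw [interior_Ioc] at hu
      have hu0 : u ≠ 0 := ne_of_gt hu.1
      exact ((((differentiableAt_id.mul (Real.differentiableAt_log hu0)).sub
        differentiableAt_id).add (differentiableAt_const 1)).sub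
        (by fun_prop)).differentiableWithinAt
    · intro u hu
      rw [interior_Ioc] at hu
      have hu0 : u ≠ 0 := ne_of_gt hu.1
      have hd : HasDerivAt h (Real.log u - u + 1) u := by
        have h1 : HasDerivAt (fun u : ℝ => u * Real.log u) (Real.log u + 1) u := by
          have h1' := (hasDerivAt_id u).mul (Real.hasDerivAt_log hu0)
          refine h1'.congr_deriv ?_
          field_simp; simp only [id]; ring
        have h2 : HasDerivAt (fun u : ℝ => (u - 1)^2 / 2) (u - 1) u := by
          have h3 : HasDerivAt (fun u : ℝ => (u - 1)^2) (2 * (u - 1) ^ 1 * (1 - 0)) u :=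
            ((hasDerivAt_id u).sub (hasDerivAt_const u 1)).pow 2
          have h4 := h3.div_const 2
          refine h4.congr_deriv ?_
          simp only [pow_one]; ring
        have h5 := ((h1.sub (hasDerivAt_id u)).add_const 1).sub h2
        refine h5.congr_deriv ?_
        ring
      rw [hd.deriv]
      have := Real.log_le_sub_one_of_pos hu.1
      linarith
  have h1 : h 1 ≤ h t := key ⟨ht, ht1⟩ ⟨one_pos, le_refl 1⟩ ht1
  simp [hh, Real.log_one] at h1
  linarith

/-- The relative pressure `P(x|y) = x log x - y log y + (y - x)(1 + log y)`. -/
noncomputable def relPressure (x y : ℝ) : ℝ :=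
  x * Real.log x - y * Real.log y + (y - x) * (1 + Real.log y)

/-- For `x, y > 0`, `P(x|y) ≥ (1/2) min{1/x, 1/y} (x - y)^2`. -/
theorem relPressure_lower_bound (x y : ℝ) (hx : 0 < x) (hy : 0 < y) :
    relPressure x y ≥ (1 / 2) * min (1 / x) (1 / y) * (x - y) ^ 2 := by
  unfold relPressure
  have hP : x * Real.log x - y * Real.log y + (y - x) * (1 + Real.log y)
      = x * (Real.log x - Real.log y) + y - x := by ring
  rcases le_total x y with hxy | hxy
  · have hmin : min (1/x) (1/y) = 1/y := min_eq_right (by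
      apply one_div_le_one_div_of_le hx hxy)
    rw [hmin, hP]
    have ht : (0:ℝ) < x / y := div_pos hx hy
    have ht1 : x / y ≤ 1 := (div_le_one hy).2 hxy
    have hB := auxB (x/y) ht ht1
    rw [Real.log_div (ne_of_gt hx) (ne_of_gt hy)] at hB
    have := mul_le_mul_of_nonneg_left hB hy.le
    have hy0 : y ≠ 0 := ne_of_gt hy
    have e1 : y * ((x/y - 1)^2 / 2) = (x - y)^2 / (2*y) := by field_simp; try ring
    have e2 : y * (x/y * (Real.log x - Real.log y) - x/y + 1)
        = x * (Real.log x - Real.log y) - x + y := by field_simp; try ring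
    rw [e1, e2] at this
    rw [ge_iff_le]
    calc (1:ℝ)/2 * (1/y) * (x - y)^2 = (x - y)^2 / (2*y) := by ring
      _ ≤ x * (Real.log x - Real.log y) - x + y := this
      _ = x * (Real.log x - Real.log y) + y - x := by ring
  · have hmin : min (1/x) (1/y) = 1/x := min_eq_left (by
      apply one_div_le_one_div_of_le hy hxy)
    rw [hmin, hP]
    have hs : (0:ℝ) < y / x := div_pos hy hx
    have hs1 : y / x ≤ 1 := (div_le_one hx).2 hxy
    have hA := auxA (y/x) hs hs1
    rw [Real.log_div (ne_of_gt hy) (ne_of_gt hx)] at hA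
    have := mul_le_mul_of_nonneg_left hA hx.le
    have hx0 : x ≠ 0 := ne_of_gt hx
    have e1 : x * ((1 - y/x)^2 / 2) = (x - y)^2 / (2*x) := by field_simp; try ring
    have e2 : x * (y/x - 1 - (Real.log y - Real.log x))
        = y - x + x * (Real.log x - Real.log y) := by field_simp; try ring
    rw [e1, e2] at this
    rw [ge_iff_le]
    calc (1:ℝ)/2 * (1/x) * (x - y)^2 = (x - y)^2 / (2*x) := by ring
      _ ≤ y - x + x * (Real.log x - Real.log y) := this
      _ = x * (Real.log x - Real.log y) + y - x := by ring
end

section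
/- Let γ > 1 be a real number. For all real x, y with x > 0 and y > 0, the relative pressure satisfies the quadratic lower bound P̃(x|y) ≥ (γ/2)·min{x^{γ−2}, y^{γ−2}}·(x − y)². -/
open Real

/-- The relative pressure
`P̃(x|y) = (1/(γ-1))(x^γ - y^γ) + (γ/(γ-1))(y - x) y^(γ-1)` for a parameter `γ`. -/
noncomputable def relPressureP (γ x y : ℝ) : ℝ :=
  (1 / (γ - 1)) * (x ^ γ - y ^ γ) + (γ / (γ - 1)) * (y - x) * y ^ (γ - 1)

noncomputable def relPressureGaux (γ y m s : ℝ) : ℝ :=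
  s ^ (γ - 1) - y ^ (γ - 1) - (γ - 1) * m * (s - y)

noncomputable def relPressureFaux (γ y m s : ℝ) : ℝ :=
  (1 / (γ - 1)) * (s ^ γ - y ^ γ) + (γ / (γ - 1)) * (y - s) * y ^ (γ - 1)
    - (γ / 2) * m * (s - y) ^ 2

lemma hasDerivAt_relPressureGaux (γ y m s : ℝ) (hs : 0 < s) :
    HasDerivAt (relPressureGaux γ y m) ((γ - 1) * (s ^ (γ - 2) - m)) s := by
  have h1 : HasDerivAt (fun t : ℝ => t ^ (γ - 1)) ((γ - 1) * s ^ (γ - 1 - 1)) s :=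
    Real.hasDerivAt_rpow_const (Or.inl hs.ne')
  have h2 : HasDerivAt (fun t : ℝ => y ^ (γ - 1) + (γ - 1) * m * (t - y))
      ((γ - 1) * m) s := by
    simpa using (((hasDerivAt_id s).sub_const y).const_mul ((γ - 1) * m)).const_add
      (y ^ (γ - 1))
  have := h1.sub h2
  have he : γ - 1 - 1 = γ - 2 := by ring
  rw [he] at this
  have heq : relPressureGaux γ y m =
      fun t : ℝ => t ^ (γ - 1) - (y ^ (γ - 1) + (γ - 1) * m * (t - y)) := by
    funext t; unfold relPressureGaux; ring
  rw [heq, show (γ - 1) * (s ^ (γ - 2) - m) = (γ - 1) * s ^ (γ - 2) - (γ - 1) * m by ring]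
  exact this

lemma hasDerivAt_relPressureFaux (γ y m s : ℝ) (hγ : 1 < γ) (hs : 0 < s) :
    HasDerivAt (relPressureFaux γ y m) ((γ / (γ - 1)) * relPressureGaux γ y m s) s := by
  have h1 : HasDerivAt (fun t : ℝ => t ^ γ) (γ * s ^ (γ - 1)) s :=
    Real.hasDerivAt_rpow_const (Or.inl hs.ne')
  have h2 : HasDerivAt (fun t : ℝ => (1 / (γ - 1)) * (t ^ γ - y ^ γ))
      ((1 / (γ - 1)) * (γ * s ^ (γ - 1))) s :=
    (h1.sub_const (y ^ γ)).const_mul _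
  have h3 : HasDerivAt (fun t : ℝ => (γ / (γ - 1)) * (y - t) * y ^ (γ - 1))
      (-(γ / (γ - 1)) * y ^ (γ - 1)) s := by
    have : HasDerivAt (fun t : ℝ => y - t) (-1) s := by
      simpa using ((hasDerivAt_id s).const_sub y)
    have := (this.const_mul (γ / (γ - 1))).mul_const (y ^ (γ - 1))
    exact this.congr_deriv (by ring)
  have h4 : HasDerivAt (fun t : ℝ => (γ / 2) * m * (t - y) ^ 2)
      ((γ / 2) * m * (2 * (s - y))) s := by
    have hb : HasDerivAt (fun t : ℝ => (t - y) ^ 2) (2 * (s - y)) s := by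
      have := ((hasDerivAt_id s).sub_const y).pow 2
      exact this.congr_deriv (by simp)
    simpa [mul_assoc] using hb.const_mul ((γ / 2) * m)
  have := (h2.add h3).sub h4
  have heq : relPressureFaux γ y m =
      fun t : ℝ => (1 / (γ - 1)) * (t ^ γ - y ^ γ) + (γ / (γ - 1)) * (y - t) * y ^ (γ - 1)
        - (γ / 2) * m * (t - y) ^ 2 := by
    funext t; unfold relPressureFaux; ring
  rw [heq]
  refine this.congr_deriv ?_
  have hne : γ - 1 ≠ 0 := by intro h; linarith
  unfold relPressureGaux
  field_simp
  ring

lemma relPressure_key (γ x y s : ℝ) (hx : 0 < x) (hy : 0 < y)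
    (h1 : min x y ≤ s) (h2 : s ≤ max x y) :
    min (x ^ (γ - 2)) (y ^ (γ - 2)) ≤ s ^ (γ - 2) := by
  have hs : 0 < s := lt_of_lt_of_le (lt_min hx hy) h1
  rcases le_or_gt 0 (γ - 2) with he | he
  · rcases le_total x y with hxy | hxy
    · calc min (x ^ (γ - 2)) (y ^ (γ - 2)) ≤ x ^ (γ - 2) := min_le_left _ _
        _ ≤ s ^ (γ - 2) := by
          apply Real.rpow_le_rpow hx.le _ he
          simpa [min_eq_left hxy] using h1
    · calc min (x ^ (γ - 2)) (y ^ (γ - 2)) ≤ y ^ (γ - 2) := min_le_right _ _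
        _ ≤ s ^ (γ - 2) := by
          apply Real.rpow_le_rpow hy.le _ he
          simpa [min_eq_right hxy] using h1
  · rcases le_total x y with hxy | hxy
    · calc min (x ^ (γ - 2)) (y ^ (γ - 2)) ≤ y ^ (γ - 2) := min_le_right _ _
        _ ≤ s ^ (γ - 2) := by
          apply Real.rpow_le_rpow_of_nonpos hs _ he.le
          simpa [max_eq_right hxy] using h2
    · calc min (x ^ (γ - 2)) (y ^ (γ - 2)) ≤ x ^ (γ - 2) := min_le_left _ _
        _ ≤ s ^ (γ - 2) := by
          apply Real.rpow_le_rpow_of_nonpos hs _ he.le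
          simpa [max_eq_left hxy] using h2

/-- For `γ > 1` and `x, y > 0`,
`P̃(x|y) ≥ (γ/2) min{x^(γ-2), y^(γ-2)} (x - y)^2`. -/
theorem relPressureP_lower_bound (γ : ℝ) (hγ : 1 < γ) (x y : ℝ)
    (hx : 0 < x) (hy : 0 < y) :
    relPressureP γ x y ≥ (γ / 2) * min (x ^ (γ - 2)) (y ^ (γ - 2)) * (x - y) ^ 2 := by
  set m := min (x ^ (γ - 2)) (y ^ (γ - 2)) with hm
  have hγ0 : 0 < γ := by linarith
  have hγ1 : 0 < γ - 1 := by linarith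
  have hFy : relPressureFaux γ y m y = 0 := by
    unfold relPressureFaux; ring
  have hmain : 0 ≤ relPressureFaux γ y m x := by
    rcases le_total y x with hxy | hxy
    · -- work on [y, x]
      have hpos : ∀ s ∈ Set.Icc y x, 0 < s := fun s hs => lt_of_lt_of_le hy hs.1
      have hkey : ∀ s ∈ Set.Icc y x, m ≤ s ^ (γ - 2) := by
        intro s hs
        exact relPressure_key γ x y s hx hy
          (by rcases le_total x y with h | h <;> simp [min_eq_left, min_eq_right, h, hs.1, hs.2]
              <;> linarith [hs.1])
          (by rcases le_total x y with h | h <;> simp [max_eq_left, max_eq_right, h]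
              <;> linarith [hs.2])
      have hGmono : MonotoneOn (relPressureGaux γ y m) (Set.Icc y x) := by
        apply monotoneOn_of_deriv_nonneg (convex_Icc y x)
        · intro s hs
          exact (hasDerivAt_relPressureGaux γ y m s (hpos s hs)).continuousAt.continuousWithinAt
        · intro s hs
          rw [interior_Icc] at hs
          exact ((hasDerivAt_relPressureGaux γ y m s (by linarith [hs.1])).differentiableAt).differentiableWithinAt
        · intro s hs
          rw [interior_Icc] at hs
          have hsp : 0 < s := by linarith [hs.1]
          rw [(hasDerivAt_relPressureGaux γ y m s hsp).deriv]
          have := hkey s ⟨hs.1.le, hs.2.le⟩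
          nlinarith
      have hGnonneg : ∀ s ∈ Set.Icc y x, 0 ≤ relPressureGaux γ y m s := by
        intro s hs
        have := hGmono (Set.left_mem_Icc.2 hxy) hs hs.1
        have hGy : relPressureGaux γ y m y = 0 := by unfold relPressureGaux; ring
        linarith [hGy ▸ this]
      have hFmono : MonotoneOn (relPressureFaux γ y m) (Set.Icc y x) := by
        apply monotoneOn_of_deriv_nonneg (convex_Icc y x)
        · intro s hs
          exact (hasDerivAt_relPressureFaux γ y m s hγ (hpos s hs)).continuousAt.continuousWithinAt
        · intro s hs
          rw [interior_Icc] at hs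
          exact ((hasDerivAt_relPressureFaux γ y m s hγ (by linarith [hs.1])).differentiableAt).differentiableWithinAt
        · intro s hs
          rw [interior_Icc] at hs
          have hsp : 0 < s := by linarith [hs.1]
          rw [(hasDerivAt_relPressureFaux γ y m s hγ hsp).deriv]
          have := hGnonneg s ⟨hs.1.le, hs.2.le⟩
          positivity
      have := hFmono (Set.left_mem_Icc.2 hxy) (Set.right_mem_Icc.2 hxy) hxy
      linarith [hFy ▸ this]
    · -- work on [x, y]
      have hpos : ∀ s ∈ Set.Icc x y, 0 < s := fun s hs => lt_of_lt_of_le hx hs.1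
      have hkey : ∀ s ∈ Set.Icc x y, m ≤ s ^ (γ - 2) := by
        intro s hs
        exact relPressure_key γ x y s hx hy
          (by rcases le_total x y with h | h <;> simp [min_eq_left, min_eq_right, h]
              <;> linarith [hs.1])
          (by rcases le_total x y with h | h <;> simp [max_eq_left, max_eq_right, h]
              <;> linarith [hs.2])
      have hGmono : MonotoneOn (relPressureGaux γ y m) (Set.Icc x y) := by
        apply monotoneOn_of_deriv_nonneg (convex_Icc x y)
        · intro s hs
          exact (hasDerivAt_relPressureGaux γ y m s (hpos s hs)).continuousAt.continuousWithinAt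
        · intro s hs
          rw [interior_Icc] at hs
          exact ((hasDerivAt_relPressureGaux γ y m s (by linarith [hs.1])).differentiableAt).differentiableWithinAt
        · intro s hs
          rw [interior_Icc] at hs
          have hsp : 0 < s := by linarith [hs.1]
          rw [(hasDerivAt_relPressureGaux γ y m s hsp).deriv]
          have := hkey s ⟨hs.1.le, hs.2.le⟩
          nlinarith
      have hGnonpos : ∀ s ∈ Set.Icc x y, relPressureGaux γ y m s ≤ 0 := by
        intro s hs
        have := hGmono hs (Set.right_mem_Icc.2 hxy) hs.2
        have hGy : relPressureGaux γ y m y = 0 := by unfold relPressureGaux; ring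
        linarith [hGy ▸ this]
      have hFanti : AntitoneOn (relPressureFaux γ y m) (Set.Icc x y) := by
        apply antitoneOn_of_deriv_nonpos (convex_Icc x y)
        · intro s hs
          exact (hasDerivAt_relPressureFaux γ y m s hγ (hpos s hs)).continuousAt.continuousWithinAt
        · intro s hs
          rw [interior_Icc] at hs
          exact ((hasDerivAt_relPressureFaux γ y m s hγ (by linarith [hs.1])).differentiableAt).differentiableWithinAt
        · intro s hs
          rw [interior_Icc] at hs
          have hsp : 0 < s := by linarith [hs.1]
          rw [(hasDerivAt_relPressureFaux γ y m s hγ hsp).deriv]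
          have hG := hGnonpos s ⟨hs.1.le, hs.2.le⟩
          have hq : 0 < γ / (γ - 1) := div_pos hγ0 hγ1
          nlinarith
      have := hFanti (Set.left_mem_Icc.2 hxy) (Set.right_mem_Icc.2 hxy) hxy
      linarith [hFy ▸ this]
  have heq : relPressureFaux γ y m x =
      relPressureP γ x y - (γ / 2) * m * (x - y) ^ 2 := by
    unfold relPressureFaux relPressureP; ring
  rw [heq] at hmain
  linarith
end

section
/- Let γ > 1 and let 0 < y_min ≤ y_max be real numbers. Then there exists a constant C > 0, depending only on γ, y_min and y_max, such that for every real x > 0 and every real y with y_min ≤ y ≤ y_max the following holds: if y/2 ≤ x ≤ 2y then P̃(x|y) ≥ C·(x − y)², and if x < y/2 or x > 2y then P̃(x|y) ≥ C·(1 + x^γ). -/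
open Real

/-- Lower bound for `t^p - 1` when `t ∈ [1,2]`, `p > 0`. -/
lemma aux_ge_one (p : ℝ) (hp : 0 < p) {t : ℝ} (ht : 1 ≤ t) (ht2 : t ≤ 2) :
    min p 1 / 2 * (t - 1) ≤ t ^ p - 1 := by
  have ht0 : (0 : ℝ) < t := lt_of_lt_of_le one_pos ht
  rcases le_or_gt 1 p with hp1 | hp1
  · have hb := one_add_mul_self_le_rpow_one_add (s := t - 1) (by linarith) hp1
    have he : (1 : ℝ) + (t - 1) = t := by ring
    rw [he] at hb
    have hmin : min p 1 = 1 := min_eq_right hp1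
    rw [hmin]
    nlinarith
  · have hmin : min p 1 = p := min_eq_left hp1.le
    rw [hmin]
    have hs : (0 : ℝ) < t ^ p := rpow_pos_of_pos ht0 p
    have hAM := Real.geom_mean_le_arith_mean2_weighted hp.le (by linarith : (0:ℝ) ≤ 1 - p)
      (le_of_lt (by positivity : (0:ℝ) < t⁻¹)) zero_le_one (by ring)
    rw [Real.one_rpow, mul_one, Real.inv_rpow ht0.le, mul_one] at hAM
    -- hAM : (t ^ p)⁻¹ ≤ p * t⁻¹ + (1 - p)
    have h1 : 1 ≤ (p * t⁻¹ + (1 - p)) * t ^ p := by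
      have := mul_le_mul_of_nonneg_right hAM hs.le
      rwa [inv_mul_cancel₀ (ne_of_gt hs)] at this
    have h2 : t ≤ (p + (1 - p) * t) * t ^ p := by
      have h3 := mul_le_mul_of_nonneg_left h1 ht0.le
      have h4 : t * ((p * t⁻¹ + (1 - p)) * t ^ p) = (p + (1 - p) * t) * t ^ p := by
        field_simp
      rw [mul_one, h4] at h3
      exact h3
    have hE0 : 0 < p + (1 - p) * t := by nlinarith
    have hEt : p + (1 - p) * t ≤ t := by nlinarith
    have hE2 : p + (1 - p) * t ≤ 2 := by nlinarith
    have hs1 : 1 ≤ t ^ p := by nlinarith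
    nlinarith [mul_le_mul_of_nonneg_left hE2 (sub_nonneg.2 hs1)]

/-- Lower bound for `1 - t^p` when `t ∈ [0,1]`, `p > 0`. -/
lemma aux_le_one (p : ℝ) (hp : 0 < p) {t : ℝ} (ht0 : 0 ≤ t) (ht : t ≤ 1) :
    min p 1 * (1 - t) ≤ 1 - t ^ p := by
  rcases le_or_gt 1 p with hp1 | hp1
  · have hmin : min p 1 = 1 := min_eq_right hp1
    rw [hmin]
    rcases eq_or_lt_of_le ht0 with h0 | h0
    · rw [← h0, Real.zero_rpow (by positivity : p ≠ 0)]
      linarith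
    · have := Real.rpow_le_rpow_of_exponent_ge h0 ht hp1
      rw [Real.rpow_one] at this
      linarith
  · have hmin : min p 1 = p := min_eq_left hp1.le
    rw [hmin]
    have hAM := Real.geom_mean_le_arith_mean2_weighted hp.le (by linarith : (0:ℝ) ≤ 1 - p)
      ht0 zero_le_one (by ring)
    rw [Real.one_rpow, mul_one, mul_one] at hAM
    linarith


/-- Quadratic lower bound for `g(u) = u^γ - 1 - γ(u-1)` on `(0,2]`. -/
lemma g_quad (γ : ℝ) (hγ : 1 < γ) {u : ℝ} (hu : 0 < u) (hu2 : u ≤ 2) :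
    γ * min (γ - 1) 1 / 4 * (u - 1) ^ 2 ≤ u ^ γ - 1 - γ * (u - 1) := by
  have hγ0 : 0 < γ := by linarith
  have hγ1 : 0 < γ - 1 := by linarith
  have hm : 0 < min (γ - 1) 1 := lt_min hγ1 one_pos
  set K := γ * min (γ - 1) 1 / 4 with hK
  set F : ℝ → ℝ := fun t => t ^ γ - (1 + γ * (t - 1) + K * (t - 1) ^ 2) with hF
  have hderiv : ∀ t : ℝ, t ≠ 0 →
      HasDerivAt F (γ * t ^ (γ - 1) - (γ + K * (2 * (t - 1)))) t := by
    intro t ht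
    have h1 : HasDerivAt (fun s : ℝ => s ^ γ) (γ * t ^ (γ - 1)) t :=
      Real.hasDerivAt_rpow_const (Or.inl ht)
    have hid : HasDerivAt (fun s : ℝ => s - 1) 1 t := (hasDerivAt_id t).sub_const 1
    have h2 : HasDerivAt (fun s : ℝ => 1 + γ * (s - 1) + K * (s - 1) ^ 2)
        (γ + K * (2 * (t - 1))) t := by
      have h3 := ((hid.const_mul γ).const_add 1).add ((hid.pow 2).const_mul K)
      refine h3.congr_deriv ?_
      push_cast
      ring
    exact h1.sub h2
  have hFc : ∀ t : ℝ, ContinuousAt F t := by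
    intro t
    exact (Real.continuousAt_rpow_const t γ (Or.inr hγ0.le)).sub
      (by fun_prop)
  have hF1 : F 1 = 0 := by simp [hF, Real.one_rpow]
  have h2K : ∀ t : ℝ, K * (2 * (t - 1)) = γ * (min (γ - 1) 1 / 2 * (t - 1)) := by
    intro t; rw [hK]; ring
  rcases le_total 1 u with h1u | hu1
  · have hmono : MonotoneOn F (Set.Icc 1 2) := by
      apply monotoneOn_of_deriv_nonneg (convex_Icc 1 2)
      · exact fun t _ => (hFc t).continuousWithinAt
      · intro t ht
        rw [interior_Icc] at ht
        exact ((hderiv t (by linarith [ht.1] : t ≠ 0)).differentiableAt).differentiableWithinAt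
      · intro t ht
        rw [interior_Icc] at ht
        obtain ⟨ht1, ht2⟩ := ht
        rw [(hderiv t (by linarith : t ≠ 0)).deriv]
        have haux := aux_ge_one (γ - 1) hγ1 ht1.le ht2.le
        have := mul_le_mul_of_nonneg_left haux hγ0.le
        linarith [h2K t, this]
    have hle := hmono (Set.mem_Icc.2 ⟨le_refl 1, by norm_num⟩)
      (Set.mem_Icc.2 ⟨h1u, hu2⟩) h1u
    rw [hF1] at hle
    simp only [hF] at hle
    linarith
  · have hanti : AntitoneOn F (Set.Icc u 1) := by
      apply antitoneOn_of_deriv_nonpos (convex_Icc u 1)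
      · exact fun t _ => (hFc t).continuousWithinAt
      · intro t ht
        rw [interior_Icc] at ht
        exact ((hderiv t (by linarith [ht.1] : t ≠ 0)).differentiableAt).differentiableWithinAt
      · intro t ht
        rw [interior_Icc] at ht
        obtain ⟨ht1, ht2⟩ := ht
        have ht0 : 0 < t := lt_trans hu ht1
        rw [(hderiv t (ne_of_gt ht0)).deriv]
        have haux := aux_le_one (γ - 1) hγ1 ht0.le ht2.le
        have h5 := mul_le_mul_of_nonneg_left haux hγ0.le
        have h6 : γ * min (γ - 1) 1 * (t - 1) ≤ 0 :=
          mul_nonpos_of_nonneg_of_nonpos (mul_nonneg hγ0.le hm.le) (by linarith)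
        linarith [h2K t]
    have hle := hanti (Set.mem_Icc.2 ⟨le_refl u, hu1⟩)
      (Set.mem_Icc.2 ⟨hu1, le_refl 1⟩) hu1
    rw [hF1] at hle
    simp only [hF] at hle
    linarith

/-- Tail lower bound `g(u) ≥ c u^γ` for `u ≥ 2`. -/
lemma g_tail (γ : ℝ) (hγ : 1 < γ) {u : ℝ} (hu : 2 ≤ u) :
    min ((2 ^ γ - (1 + γ)) / 2 ^ γ) (1 - 2 ^ (1 - γ)) * u ^ γ
      ≤ u ^ γ - 1 - γ * (u - 1) := by
  have hγ0 : 0 < γ := by linarith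
  have h2γ : (0 : ℝ) < 2 ^ γ := rpow_pos_of_pos two_pos γ
  set c := min ((2 ^ γ - (1 + γ)) / 2 ^ γ) (1 - 2 ^ (1 - γ)) with hc
  have hcle : c ≤ (2 ^ γ - (1 + γ)) / 2 ^ γ := min_le_left _ _
  have hcle2 : c ≤ 1 - 2 ^ (1 - γ) := min_le_right _ _
  have h3 : (0 : ℝ) < 2 ^ (1 - γ) := rpow_pos_of_pos two_pos _
  set H : ℝ → ℝ := fun t => (1 - c) * t ^ γ - (1 + γ * (t - 1)) with hH
  have hderiv : ∀ t : ℝ, t ≠ 0 → HasDerivAt H ((1 - c) * (γ * t ^ (γ - 1)) - γ) t := by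
    intro t ht
    have h1 : HasDerivAt (fun s : ℝ => s ^ γ) (γ * t ^ (γ - 1)) t :=
      Real.hasDerivAt_rpow_const (Or.inl ht)
    have h2 : HasDerivAt (fun s : ℝ => 1 + γ * (s - 1)) γ t := by
      have hid : HasDerivAt (fun s : ℝ => s - 1) 1 t := (hasDerivAt_id t).sub_const 1
      have := (hid.const_mul γ).const_add 1
      simpa using this
    exact (h1.const_mul (1 - c)).sub h2
  have hFc : ∀ t : ℝ, ContinuousAt H t := by
    intro t
    exact (((Real.continuousAt_rpow_const t γ (Or.inr hγ0.le)).const_smul (1 - c)).sub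
      (by fun_prop : ContinuousAt (fun s : ℝ => 1 + γ * (s - 1)) t))
  have hmono : MonotoneOn H (Set.Ici 2) := by
    apply monotoneOn_of_deriv_nonneg (convex_Ici 2)
    · exact fun t _ => (hFc t).continuousWithinAt
    · intro t ht
      rw [interior_Ici] at ht
      exact ((hderiv t (by simp at ht; linarith : t ≠ 0)).differentiableAt).differentiableWithinAt
    · intro t ht
      rw [interior_Ici] at ht
      have ht2 : (2 : ℝ) < t := ht
      rw [(hderiv t (by linarith : t ≠ 0)).deriv]
      have h1 : (2 : ℝ) ^ (γ - 1) ≤ t ^ (γ - 1) :=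
        rpow_le_rpow (by norm_num) ht2.le (by linarith)
      have h1c : 2 ^ (1 - γ) ≤ 1 - c := by linarith
      have hmm := mul_le_mul h1c h1 (rpow_nonneg (by norm_num) _) (by linarith)
      have h2 : (2 : ℝ) ^ (1 - γ) * 2 ^ (γ - 1) = 1 := by
        rw [← Real.rpow_add two_pos]; norm_num
      rw [h2] at hmm
      nlinarith [mul_le_mul_of_nonneg_left hmm hγ0.le]
  have hH2 : 0 ≤ H 2 := by
    have := (le_div_iff₀ h2γ).1 hcle
    simp only [hH]
    nlinarith
  have hle := hmono (Set.mem_Ici.2 (le_refl 2)) (Set.mem_Ici.2 hu) hu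
  have := le_trans hH2 hle
  simp only [hH] at this
  nlinarith

set_option maxHeartbeats 1600000

/-- For `γ > 1` and `0 < y_min ≤ y_max` there is a constant `C = C(γ, y_min, y_max) > 0`
such that for all `x > 0` and `y ∈ [y_min, y_max]`:
if `y/2 ≤ x ≤ 2y` then `P̃(x|y) ≥ C (x - y)^2`, and
if `x < y/2` or `x > 2y` then `P̃(x|y) ≥ C (1 + x^γ)`. -/

theorem relPressureP_dichotomy_lower_bound (γ : ℝ) (hγ : 1 < γ)
    (ymin ymax : ℝ) (hymin : 0 < ymin) (hle : ymin ≤ ymax) :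
    ∃ C > (0:ℝ), ∀ x y : ℝ, 0 < x → ymin ≤ y → y ≤ ymax →
      ((y / 2 ≤ x ∧ x ≤ 2 * y → relPressureP γ x y ≥ C * (x - y) ^ 2) ∧
       (x < y / 2 ∨ 2 * y < x → relPressureP γ x y ≥ C * (1 + x ^ γ))) := by
  have hγ0 : 0 < γ := by linarith
  have hγ1 : 0 < γ - 1 := by linarith
  have hymax : 0 < ymax := lt_of_lt_of_le hymin hle
  have hm : 0 < min (γ - 1) 1 := lt_min hγ1 one_pos
  set K := γ * min (γ - 1) 1 / 4 with hKdef
  have hK : 0 < K := by rw [hKdef]; positivity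
  have h2γ : (0 : ℝ) < 2 ^ γ := rpow_pos_of_pos two_pos γ
  set c := min ((2 ^ γ - (1 + γ)) / 2 ^ γ) (1 - 2 ^ (1 - γ)) with hcdef
  have hc : 0 < c := by
    apply lt_min
    · apply div_pos _ h2γ
      have hb := one_add_mul_self_lt_rpow_one_add (s := (1:ℝ)) (by norm_num) (by norm_num) hγ
      norm_num at hb
      linarith
    · have : (2 : ℝ) ^ (1 - γ) < 1 := rpow_lt_one_of_one_lt_of_neg one_lt_two (by linarith)
      linarith
  have hyminγ : 0 < ymin ^ γ := rpow_pos_of_pos hymin γ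
  set C1 := K * ymin ^ γ / ((γ - 1) * ymax ^ 2) with hC1def
  have hC1 : 0 < C1 := by rw [hC1def]; positivity
  have hmin2 : 0 < min ((2 * ymin) ^ γ) 1 :=
    lt_min (rpow_pos_of_pos (by linarith) γ) one_pos
  set C2 := c / (γ - 1) * min ((2 * ymin) ^ γ) 1 / 2 with hC2def
  have hC2 : 0 < C2 := by
    rw [hC2def]; positivity
  set δ := ymin ^ γ * K / (4 * (γ - 1)) with hδdef
  have hδ : 0 < δ := by rw [hδdef]; positivity
  have hM0 : (0:ℝ) < (ymax / 2) ^ γ := rpow_pos_of_pos (by linarith) γ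
  set M := 1 + (ymax / 2) ^ γ with hMdef
  have hM : 0 < M := by rw [hMdef]; linarith
  set C3 := δ / M with hC3def
  have hC3 : 0 < C3 := div_pos hδ hM
  clear_value K c C1 C2 δ M C3
  refine ⟨min C1 (min C2 C3), lt_min hC1 (lt_min hC2 hC3), ?_⟩
  intro x y hx hyl hyr
  have hy : 0 < y := lt_of_lt_of_le hymin hyl
  set u := x / y with hudef
  have hu : 0 < u := div_pos hx hy
  clear_value u
  have hxeq : x = u * y := by
    rw [hudef]; exact (div_mul_cancel₀ x (ne_of_gt hy)).symm
  have hyγ : y ^ γ = y * y ^ (γ - 1) := by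
    calc y ^ γ = y ^ (1 + (γ - 1)) := by norm_num
      _ = y ^ (1 : ℝ) * y ^ (γ - 1) := rpow_add hy 1 (γ - 1)
      _ = y * y ^ (γ - 1) := by rw [rpow_one]
  have hxγ : x ^ γ = u ^ γ * (y * y ^ (γ - 1)) := by
    rw [hxeq, mul_rpow hu.le hy.le, hyγ]
  have key : relPressureP γ x y = y ^ γ / (γ - 1) * (u ^ γ - 1 - γ * (u - 1)) := by
    rw [relPressureP, hxγ, hyγ]
    rw [hxeq]
    ring
  set R := relPressureP γ x y with hRdef
  clear_value R
  clear hRdef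
  have hfac : 0 ≤ y ^ γ / (γ - 1) := le_of_lt (div_pos (rpow_pos_of_pos hy γ) hγ1)
  have hyy : ymin ^ γ ≤ y ^ γ := rpow_le_rpow hymin.le hyl hγ0.le
  constructor
  · rintro ⟨hx1, hx2⟩
    have hu2 : u ≤ 2 := by rw [hudef, div_le_iff₀ hy]; linarith
    have hg := g_quad γ hγ hu hu2
    rw [← hKdef] at hg
    have step1 : y ^ γ / (γ - 1) * (K * (u - 1) ^ 2) ≤ R := by
      rw [key]; exact mul_le_mul_of_nonneg_left hg hfac
    have hid : (x - y) ^ 2 = (u - 1) ^ 2 * y ^ 2 := by rw [hxeq]; ring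
    have hy2 : y ^ 2 ≤ ymax ^ 2 := by nlinarith
    have step2 : min C1 (min C2 C3) * (x - y) ^ 2 ≤ y ^ γ / (γ - 1) * (K * (u - 1) ^ 2) := by
      rw [hid]
      have h1 : min C1 (min C2 C3) * y ^ 2 ≤ K * y ^ γ / (γ - 1) := by
        calc min C1 (min C2 C3) * y ^ 2 ≤ C1 * ymax ^ 2 :=
              mul_le_mul (min_le_left _ _) hy2 (sq_nonneg y) hC1.le
          _ = K * ymin ^ γ / (γ - 1) := by
              rw [hC1def]; field_simp
          _ ≤ K * y ^ γ / (γ - 1) := by gcongr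
      calc min C1 (min C2 C3) * ((u - 1) ^ 2 * y ^ 2)
          = min C1 (min C2 C3) * y ^ 2 * (u - 1) ^ 2 := by ring
        _ ≤ K * y ^ γ / (γ - 1) * (u - 1) ^ 2 :=
            mul_le_mul_of_nonneg_right h1 (sq_nonneg _)
        _ = y ^ γ / (γ - 1) * (K * (u - 1) ^ 2) := by ring
    exact le_trans step2 step1
  · intro hcase
    have hxγ0 : 0 ≤ x ^ γ := rpow_nonneg hx.le γ
    rcases hcase with hsmall | hbig
    · have hu2 : u ≤ 2 := by rw [hudef, div_le_iff₀ hy]; linarith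
      have huh : u < 1 / 2 := by rw [hudef, div_lt_iff₀ hy]; linarith
      have hg := g_quad γ hγ hu hu2
      rw [← hKdef] at hg
      have hq0 : ((1:ℝ) / 2) ^ 2 ≤ (u - 1) ^ 2 := by
        have h := pow_le_pow_left₀ (by norm_num : (0:ℝ) ≤ 1 / 2)
          (by linarith : (1:ℝ) / 2 ≤ 1 - u) 2
        calc ((1:ℝ) / 2) ^ 2 ≤ (1 - u) ^ 2 := h
          _ = (u - 1) ^ 2 := by ring
      have hq : K * (1 / 2 : ℝ) ^ 2 ≤ K * (u - 1) ^ 2 :=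
        mul_le_mul_of_nonneg_left hq0 hK.le
      have step1 : y ^ γ / (γ - 1) * (K * (1 / 2 : ℝ) ^ 2) ≤ R := by
        rw [key]
        exact le_trans (mul_le_mul_of_nonneg_left hq hfac)
          (mul_le_mul_of_nonneg_left hg hfac)
      have step2 : δ ≤ y ^ γ / (γ - 1) * (K * (1 / 2 : ℝ) ^ 2) := by
        have hne : γ - 1 ≠ 0 := ne_of_gt hγ1
        have he : y ^ γ / (γ - 1) * (K * (1 / 2 : ℝ) ^ 2) = y ^ γ * K / (4 * (γ - 1)) := by
          field_simp
          ring
        rw [he, hδdef]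
        exact (div_le_div_iff_of_pos_right (by linarith : (0:ℝ) < 4 * (γ - 1))).2
          (mul_le_mul_of_nonneg_right hyy hK.le)
      have hxym : x ≤ ymax / 2 := by linarith
      have hxM : x ^ γ ≤ (ymax / 2) ^ γ := rpow_le_rpow hx.le hxym hγ0.le
      have hfinal : min C1 (min C2 C3) * (1 + x ^ γ) ≤ δ := by
        have h1 : min C1 (min C2 C3) ≤ C3 := le_trans (min_le_right _ _) (min_le_right _ _)
        have h2 : 1 + x ^ γ ≤ M := by rw [hMdef]; linarith
        calc min C1 (min C2 C3) * (1 + x ^ γ) ≤ C3 * M :=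
              mul_le_mul h1 h2 (add_nonneg zero_le_one hxγ0) hC3.le
          _ = δ := by rw [hC3def]; field_simp
      exact le_trans (le_trans hfinal step2) step1
    · have hu2 : (2 : ℝ) ≤ u := by rw [hudef, le_div_iff₀ hy]; linarith
      have hg := g_tail γ hγ hu2
      rw [← hcdef] at hg
      have step1 : y ^ γ / (γ - 1) * (c * u ^ γ) ≤ R := by
        rw [key]; exact mul_le_mul_of_nonneg_left hg hfac
      have hux : y ^ γ / (γ - 1) * (c * u ^ γ) = c / (γ - 1) * x ^ γ := by
        rw [hxγ, hyγ]; ring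
      rw [hux] at step1
      have hxbig : (2 * ymin) ^ γ ≤ x ^ γ :=
        rpow_le_rpow (by positivity) (by linarith) hγ0.le
      have hcγ : 0 < c / (γ - 1) := div_pos hc hγ1
      have hA : C2 ≤ c / (γ - 1) * x ^ γ / 2 := by
        calc C2 ≤ c / (γ - 1) * (2 * ymin) ^ γ / 2 := by
              rw [hC2def]
              gcongr
              exact min_le_left _ _
          _ ≤ c / (γ - 1) * x ^ γ / 2 := by gcongr
      have hB : C2 ≤ c / (γ - 1) / 2 := by
        calc C2 ≤ c / (γ - 1) * 1 / 2 := by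
              rw [hC2def]; gcongr; exact min_le_right _ _
          _ = c / (γ - 1) / 2 := by ring
      have hfinal : min C1 (min C2 C3) * (1 + x ^ γ) ≤ c / (γ - 1) * x ^ γ := by
        have h1 : min C1 (min C2 C3) ≤ C2 := le_trans (min_le_right _ _) (min_le_left _ _)
        have h2 := mul_le_mul_of_nonneg_right h1 (by linarith : (0:ℝ) ≤ 1 + x ^ γ)
        have h3 := mul_le_mul_of_nonneg_right hB hxγ0
        nlinarith
      exact le_trans hfinal step1
end

section
/- Let Ω ⊂ ℝ³ be a bounded measurable set and let δ > 0. Then there exists a constant C > 0, depending only on δ and Ω, such that for every measurable function f : Ω × ℝ³ → [0, ∞) with ∫_{Ω×ℝ³} ‖ξ‖²·f(x, ξ) dx dξ < ∞, one has ∫_{Ω×ℝ³} f·log⁻ f dx dξ ≤ C + δ·∫_{Ω×ℝ³} ‖ξ‖²·f dx dξ. -/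
open MeasureTheory Real
open scoped ENNReal

/-- Pointwise key estimate: `t·log⁻ t ≤ a·t + 2·exp(-a/2)` for `t, a ≥ 0`. -/
lemma key_pointwise {t a : ℝ} (ht : 0 ≤ t) (ha : 0 ≤ a) :
    t * max 0 (-Real.log t) ≤ a * t + 2 * Real.exp (-(a / 2)) := by
  rcases le_or_gt (-Real.log t) 0 with h | h
  · rw [max_eq_left h]
    have := Real.exp_pos (-(a / 2))
    nlinarith
  rw [max_eq_right h.le]
  rcases le_or_gt (Real.exp (-a)) t with h1 | h1
  · have ht' : 0 < t := lt_of_lt_of_le (Real.exp_pos _) h1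
    have : -a ≤ Real.log t := by
      have := Real.log_le_log (Real.exp_pos _) h1
      rwa [Real.log_exp] at this
    have h2 : -Real.log t ≤ a := by linarith
    have := Real.exp_pos (-(a / 2))
    nlinarith
  · rcases eq_or_lt_of_le ht with rfl | ht'
    · simp
      positivity
    have hst : 0 < Real.sqrt t := Real.sqrt_pos.2 ht'
    have hlog : Real.log (Real.sqrt t) = Real.log t / 2 := Real.log_sqrt ht
    have hinv : Real.log (Real.sqrt t)⁻¹ ≤ (Real.sqrt t)⁻¹ := by
      have := Real.log_le_sub_one_of_pos (inv_pos.2 hst)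
      linarith
    have hloginv : Real.log (Real.sqrt t)⁻¹ = -(Real.log t / 2) := by
      rw [Real.log_inv, hlog]
    have hts : Real.sqrt t * Real.sqrt t = t := Real.mul_self_sqrt ht
    have key1 : t * (-Real.log t) ≤ 2 * Real.sqrt t := by
      have h3 : -(Real.log t / 2) ≤ (Real.sqrt t)⁻¹ := by rw [← hloginv]; exact hinv
      have h4 : t * (-(Real.log t / 2)) ≤ t * (Real.sqrt t)⁻¹ :=
        mul_le_mul_of_nonneg_left h3 ht
      have h5 : t * (Real.sqrt t)⁻¹ = Real.sqrt t := by
        field_simp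
        rw [Real.sq_sqrt ht]
      nlinarith
    have key2 : Real.sqrt t ≤ Real.exp (-(a / 2)) := by
      have : Real.sqrt t ≤ Real.sqrt (Real.exp (-a)) := Real.sqrt_le_sqrt h1.le
      rwa [← Real.exp_half, neg_div] at this
    nlinarith

/-- For a bounded measurable `Ω ⊂ ℝ³` and `δ > 0` there is `C = C(δ, Ω) > 0` such that
for every measurable `f : Ω × ℝ³ → [0, ∞)` with finite second velocity moment,
`∫ f log⁻ f ≤ C + δ ∫ ‖ξ‖² f`, where `log⁻ f = max {0, -log f}`. -/
theorem integral_mul_log_neg_le (Ω : Set (EuclideanSpace ℝ (Fin 3)))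
    (hΩmeas : MeasurableSet Ω) (hΩbdd : Bornology.IsBounded Ω)
    (δ : ℝ) (hδ : 0 < δ) :
    ∃ C > (0:ℝ),
      ∀ f : EuclideanSpace ℝ (Fin 3) × EuclideanSpace ℝ (Fin 3) → ℝ,
        Measurable f → (∀ p, 0 ≤ f p) →
        (∫⁻ p in Ω ×ˢ Set.univ, ENNReal.ofReal (‖p.2‖ ^ 2 * f p) < ∞) →
        ∫⁻ p in Ω ×ˢ Set.univ, ENNReal.ofReal (f p * max 0 (-Real.log (f p))) ≤
          ENNReal.ofReal C +
            ENNReal.ofReal δ * ∫⁻ p in Ω ×ˢ Set.univ, ENNReal.ofReal (‖p.2‖ ^ 2 * f p) := by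
  set g : EuclideanSpace ℝ (Fin 3) → ℝ := fun ξ => 2 * Real.exp (-(δ * ‖ξ‖ ^ 2 / 2)) with hg
  have hgint : Integrable g := by
    have h := (GaussianFourier.integrable_cexp_neg_mul_sq_norm_add
      (V := EuclideanSpace ℝ (Fin 3)) (b := (δ/2 : ℂ)) (by simpa using half_pos hδ) 0 0).norm
    have heq : (fun v : EuclideanSpace ℝ (Fin 3) =>
        ‖Complex.exp (-(δ/2 : ℂ) * (‖v‖:ℂ)^2 + 0 * ((inner ℝ (0:EuclideanSpace ℝ (Fin 3)) v : ℝ):ℂ))‖)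
        = fun v : EuclideanSpace ℝ (Fin 3) => Real.exp (-(δ * ‖v‖ ^ 2 / 2)) := by
      funext v
      rw [Complex.norm_exp]
      congr 1
      have : (-(δ/2 : ℂ) * (‖v‖:ℂ)^2 + 0 * ((inner ℝ (0:EuclideanSpace ℝ (Fin 3)) v : ℝ):ℂ))
          = ((-(δ * ‖v‖^2/2) : ℝ) : ℂ) := by push_cast; ring
      rw [this, Complex.ofReal_re]
    rw [heq] at h
    exact h.const_mul 2
  have hmeasg : Measurable g := by
    apply Measurable.const_mul
    exact (measurable_norm.pow measurable_const).const_mul δ |>.div_const 2 |>.neg.exp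
  have hI : (∫⁻ ξ : EuclideanSpace ℝ (Fin 3), ENNReal.ofReal (g ξ)) < ∞ := by
    have := hgint.hasFiniteIntegral
    rw [hasFiniteIntegral_iff_norm] at this
    refine lt_of_le_of_lt (lintegral_mono fun ξ => ?_) this
    exact ENNReal.ofReal_le_ofReal (le_abs_self _)
  set I := ∫⁻ ξ : EuclideanSpace ℝ (Fin 3), ENNReal.ofReal (g ξ) with hIdef
  have hΩfin : volume Ω < ∞ := hΩbdd.measure_lt_top
  have hKI : volume Ω * I < ∞ := ENNReal.mul_lt_top hΩfin hI
  refine ⟨(volume Ω * I).toReal + 1,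
    by have := ENNReal.toReal_nonneg (a := volume Ω * I); linarith,
    fun f hf hf0 _hmom => ?_⟩
  have hpt : ∀ p : EuclideanSpace ℝ (Fin 3) × EuclideanSpace ℝ (Fin 3),
      ENNReal.ofReal (f p * max 0 (-Real.log (f p))) ≤
        ENNReal.ofReal (δ * (‖p.2‖ ^ 2 * f p)) + ENNReal.ofReal (g p.2) := by
    intro p
    rw [← ENNReal.ofReal_add (mul_nonneg hδ.le (mul_nonneg (by positivity) (hf0 p))) (by simp only [hg]; positivity)]
    apply ENNReal.ofReal_le_ofReal
    have := key_pointwise (hf0 p) (a := δ * ‖p.2‖ ^ 2) (by positivity)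
    calc f p * max 0 (-Real.log (f p))
        ≤ δ * ‖p.2‖ ^ 2 * f p + 2 * Real.exp (-(δ * ‖p.2‖ ^ 2 / 2)) := this
      _ = δ * (‖p.2‖ ^ 2 * f p) + g p.2 := by rw [hg]; ring
  have hmeas1 : Measurable fun p : EuclideanSpace ℝ (Fin 3) × EuclideanSpace ℝ (Fin 3) =>
      ENNReal.ofReal (δ * (‖p.2‖ ^ 2 * f p)) := by
    apply ENNReal.measurable_ofReal.comp
    exact (((measurable_norm.comp measurable_snd).pow measurable_const).mul hf).const_mul δ
  calc ∫⁻ p in Ω ×ˢ Set.univ, ENNReal.ofReal (f p * max 0 (-Real.log (f p)))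
      ≤ ∫⁻ p in Ω ×ˢ Set.univ,
          (ENNReal.ofReal (δ * (‖p.2‖ ^ 2 * f p)) + ENNReal.ofReal (g p.2)) :=
        lintegral_mono hpt
    _ = (∫⁻ p in Ω ×ˢ Set.univ, ENNReal.ofReal (δ * (‖p.2‖ ^ 2 * f p))) +
          ∫⁻ p in Ω ×ˢ Set.univ, ENNReal.ofReal (g p.2) := lintegral_add_left hmeas1 _
    _ ≤ ENNReal.ofReal ((volume Ω * I).toReal + 1) +
          ENNReal.ofReal δ * ∫⁻ p in Ω ×ˢ Set.univ, ENNReal.ofReal (‖p.2‖ ^ 2 * f p) := by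
        rw [add_comm]
        gcongr
        · have heq : ∫⁻ p in Ω ×ˢ Set.univ, ENNReal.ofReal (g p.2) = volume Ω * I := by
            rw [Measure.volume_eq_prod, ← Measure.prod_restrict, Measure.restrict_univ,
              lintegral_prod (fun z => ENNReal.ofReal (g z.2))
                ((ENNReal.measurable_ofReal.comp (hmeasg.comp measurable_snd)).aemeasurable)]
            simp only [Prod.snd]
            rw [lintegral_const, Measure.restrict_apply_univ, mul_comm]
          rw [heq]
          calc volume Ω * I = ENNReal.ofReal (volume Ω * I).toReal := by
                rw [ENNReal.ofReal_toReal hKI.ne]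
            _ ≤ ENNReal.ofReal ((volume Ω * I).toReal + 1) :=
                ENNReal.ofReal_le_ofReal (by linarith)
        · have h2 : ∀ p : EuclideanSpace ℝ (Fin 3) × EuclideanSpace ℝ (Fin 3),
              ENNReal.ofReal (δ * (‖p.2‖ ^ 2 * f p)) =
              ENNReal.ofReal δ * ENNReal.ofReal (‖p.2‖ ^ 2 * f p) := fun p =>
            ENNReal.ofReal_mul hδ.le
          simp_rw [h2]
          rw [lintegral_const_mul' _ _ ENNReal.ofReal_ne_top]
end

section
/- Let r > 0 and let p be a real number with 1 < p < (r + 3)/4. Then there exists a constant C > 0, depending only on r and p, such that for every M > 0 and every measurable function f : ℝ³ → ℝ with 0 ≤ f(ξ) ≤ M for almost every ξ, one has ( ∫_{ℝ³} ‖ξ‖·f(ξ) dξ )^p ≤ C · M^{p−1} · ∫_{ℝ³} (1 + ‖ξ‖)^r · f(ξ) dξ. -/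
open MeasureTheory Real
open scoped ENNReal
open Metric

/-- For `r > 0` and `1 < p < (r+3)/4` there is `C = C(r, p) > 0` such that for any `M > 0`
and measurable `f : ℝ³ → ℝ` with `0 ≤ f ≤ M` a.e.,
`(∫ ‖ξ‖ f dξ)^p ≤ C M^(p-1) ∫ (1 + ‖ξ‖)^r f dξ`. -/
theorem momentum_moment_bound (r p : ℝ) (hr : 0 < r) (hp1 : 1 < p) (hp2 : p < (r + 3) / 4) :
    ∃ C > (0:ℝ), ∀ M : ℝ, 0 < M → ∀ f : EuclideanSpace ℝ (Fin 3) → ℝ,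
      Measurable f → (∀ᵐ ξ, 0 ≤ f ξ ∧ f ξ ≤ M) →
      (∫⁻ ξ, ENNReal.ofReal (‖ξ‖ * f ξ)) ^ p ≤
        ENNReal.ofReal C * ENNReal.ofReal (M ^ (p - 1)) *
          ∫⁻ ξ, ENNReal.ofReal ((1 + ‖ξ‖) ^ r * f ξ) := by
  have hr1 : 1 < r := by nlinarith
  have hp0 : (0:ℝ) ≤ p := by linarith
  set V : ℝ≥0∞ := volume (ball (0 : EuclideanSpace ℝ (Fin 3)) 1) with hVdef
  have hVlt : V ≠ ⊤ := measure_ball_lt_top.ne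
  set v : ℝ := V.toReal with hvdef
  have hv0 : 0 ≤ v := ENNReal.toReal_nonneg
  refine ⟨max 1 ((v+1)^p), lt_of_lt_of_le one_pos (le_max_left _ _), ?_⟩
  set C := max 1 ((v+1)^p) with hCdef
  have hC1 : (1:ℝ) ≤ C := le_max_left _ _
  have hC1' : (1:ℝ≥0∞) ≤ ENNReal.ofReal C := by
    rw [← ENNReal.ofReal_one]; exact ENNReal.ofReal_le_ofReal hC1
  have hCof : (V + 1 : ℝ≥0∞) ^ p ≤ ENNReal.ofReal C := by
    have hVv : (V + 1 : ℝ≥0∞) = ENNReal.ofReal (v + 1) := by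
      rw [ENNReal.ofReal_add hv0 zero_le_one, ENNReal.ofReal_one,
        ENNReal.ofReal_toReal hVlt]
    rw [hVv, ENNReal.ofReal_rpow_of_pos (by linarith)]
    exact ENNReal.ofReal_le_ofReal (le_max_right _ _)
  intro M hM f hfm hfb
  set I := ∫⁻ ξ : EuclideanSpace ℝ (Fin 3), ENNReal.ofReal (‖ξ‖ * f ξ) with hIdef
  set A := ∫⁻ ξ : EuclideanSpace ℝ (Fin 3), ENNReal.ofReal ((1 + ‖ξ‖) ^ r * f ξ) with hAdef
  have hMp0 : ENNReal.ofReal (M ^ (p-1)) ≠ 0 := by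
    simp [ENNReal.ofReal_eq_zero, not_le, Real.rpow_pos_of_pos hM]
  have hMpeq : (ENNReal.ofReal M) ^ (p-1) = ENNReal.ofReal (M ^ (p-1)) :=
    ENNReal.ofReal_rpow_of_pos hM
  rcases eq_or_ne A ⊤ with hAtop | hAtop
  · rw [hAtop, ENNReal.mul_top]
    · exact le_top
    · exact mul_ne_zero (by simpa using lt_of_lt_of_le one_pos hC1') hMp0
  have hnorm_le : ∀ ξ : EuclideanSpace ℝ (Fin 3), ‖ξ‖ ≤ (1 + ‖ξ‖) ^ r := by
    intro ξ
    have h1 : (1:ℝ) ≤ 1 + ‖ξ‖ := by linarith [norm_nonneg ξ]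
    calc ‖ξ‖ ≤ 1 + ‖ξ‖ := by linarith
    _ = (1 + ‖ξ‖) ^ (1:ℝ) := (Real.rpow_one _).symm
    _ ≤ (1 + ‖ξ‖) ^ r := Real.rpow_le_rpow_of_exponent_le h1 (le_of_lt hr1)
  rcases le_or_gt A (ENNReal.ofReal M) with hAM | hAM
  · -- small case : I ≤ A ≤ M
    have hIA : I ≤ A := by
      refine lintegral_mono_ae (hfb.mono fun ξ hξ => ?_)
      exact ENNReal.ofReal_le_ofReal (mul_le_mul_of_nonneg_right (hnorm_le ξ) hξ.1)
    rcases eq_or_ne A 0 with hA0 | hA0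
    · have : I = 0 := le_antisymm (hA0 ▸ hIA) zero_le
      rw [this, ENNReal.zero_rpow_of_pos (by linarith)]
      exact zero_le
    calc I ^ p ≤ A ^ p := ENNReal.rpow_le_rpow hIA hp0
    _ = A ^ (p-1) * A := by
        have h := ENNReal.rpow_add (x := A) (p-1) 1 hA0 hAtop
        rw [sub_add_cancel, ENNReal.rpow_one] at h
        exact h
    _ ≤ ENNReal.ofReal (M ^ (p-1)) * A := by
        gcongr
        rw [← hMpeq]
        exact ENNReal.rpow_le_rpow hAM (by linarith)
    _ ≤ ENNReal.ofReal C * ENNReal.ofReal (M ^ (p-1)) * A := by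
        rw [mul_assoc]
        exact le_mul_of_one_le_left zero_le hC1'
  · -- main case : M < A < ⊤
    set a : ℝ := A.toReal with hadef
    have hAa : A = ENNReal.ofReal a := (ENNReal.ofReal_toReal hAtop).symm
    have hMa : M ≤ a := by
      rw [hAa] at hAM
      have := (ENNReal.ofReal_lt_ofReal_iff_of_nonneg (le_of_lt hM)).mp hAM
      linarith
    have ha0 : 0 < a := lt_of_lt_of_le hM hMa
    have haM1 : 1 ≤ a / M := (one_le_div hM).mpr hMa
    have haM0 : 0 < a / M := by positivity
    set s : ℝ := (a / M) ^ (1/(r+3)) with hsdef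
    have hs1 : 1 ≤ s := Real.one_le_rpow haM1 (by positivity)
    have hs0 : 0 < s := lt_of_lt_of_le one_pos hs1
    have hspow : s ^ (r+3) = a / M := by
      rw [hsdef, ← Real.rpow_mul haM0.le, one_div,
        inv_mul_cancel₀ (by positivity), Real.rpow_one]
    have haMs : a = M * s ^ (r+3) := by
      rw [hspow]; field_simp
    set t : ℝ := s ^ (4:ℝ) with htdef
    have ht0 : 0 < t := Real.rpow_pos_of_pos hs0 _
    have hsr0 : (0:ℝ) < s ^ (1 - r) := Real.rpow_pos_of_pos hs0 _
    -- pointwise bound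
    have hpt : ∀ᵐ ξ : EuclideanSpace ℝ (Fin 3), ENNReal.ofReal (‖ξ‖ * f ξ) ≤
        (ball (0 : EuclideanSpace ℝ (Fin 3)) s).indicator
            (fun _ => ENNReal.ofReal (M * s)) ξ
          + ENNReal.ofReal (s ^ (1 - r)) * ENNReal.ofReal ((1 + ‖ξ‖) ^ r * f ξ) := by
      refine hfb.mono fun ξ hξ => ?_
      obtain ⟨hf0, hfM⟩ := hξ
      by_cases hξs : ξ ∈ ball (0 : EuclideanSpace ℝ (Fin 3)) s
      · rw [Set.indicator_of_mem hξs]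
        have hξn : ‖ξ‖ < s := by simpa [mem_ball, dist_zero_right] using hξs
        have : ‖ξ‖ * f ξ ≤ M * s := by
          calc ‖ξ‖ * f ξ ≤ s * M := mul_le_mul hξn.le hfM hf0 hs0.le
          _ = M * s := mul_comm _ _
        exact le_trans (ENNReal.ofReal_le_ofReal this) le_self_add
      · rw [Set.indicator_of_notMem hξs, zero_add, ← ENNReal.ofReal_mul hsr0.le]
        refine ENNReal.ofReal_le_ofReal ?_
        have hξn : s ≤ ‖ξ‖ := by
          simpa [mem_ball, dist_zero_right, not_lt] using hξs
        have h1ξ : (0:ℝ) < 1 + ‖ξ‖ := by positivity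
        have hs1ξ : s ≤ 1 + ‖ξ‖ := by linarith
        have h2 : (1 + ‖ξ‖) ^ (1-r) ≤ s ^ (1-r) :=
          Real.rpow_le_rpow_of_nonpos hs0 hs1ξ (by linarith)
        have h3 : (1:ℝ) + ‖ξ‖ = (1 + ‖ξ‖) ^ (1-r) * (1 + ‖ξ‖) ^ r := by
          rw [← Real.rpow_add h1ξ]; norm_num
        have key : ‖ξ‖ ≤ s ^ (1-r) * (1 + ‖ξ‖) ^ r := by
          have h4 : (1:ℝ) + ‖ξ‖ ≤ s ^ (1-r) * (1 + ‖ξ‖) ^ r := by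
            calc (1:ℝ) + ‖ξ‖ = (1 + ‖ξ‖) ^ (1-r) * (1 + ‖ξ‖) ^ r := h3
            _ ≤ s ^ (1-r) * (1 + ‖ξ‖) ^ r :=
                mul_le_mul_of_nonneg_right h2 (Real.rpow_nonneg h1ξ.le _)
          linarith [norm_nonneg ξ]
        calc ‖ξ‖ * f ξ ≤ (s ^ (1-r) * (1 + ‖ξ‖) ^ r) * f ξ :=
              mul_le_mul_of_nonneg_right key hf0
        _ = s ^ (1-r) * ((1 + ‖ξ‖) ^ r * f ξ) := by ring
    have hgm : Measurable fun ξ : EuclideanSpace ℝ (Fin 3) =>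
        ENNReal.ofReal ((1 + ‖ξ‖) ^ r * f ξ) := by
      apply Measurable.ennreal_ofReal
      have : Measurable fun ξ : EuclideanSpace ℝ (Fin 3) => (1 + ‖ξ‖) ^ r := by fun_prop
      exact this.mul hfm
    have hIle : I ≤ ENNReal.ofReal (M * t) * V + ENNReal.ofReal (M * t) := by
      have step1 : I ≤ ∫⁻ ξ : EuclideanSpace ℝ (Fin 3),
          ((ball (0 : EuclideanSpace ℝ (Fin 3)) s).indicator
            (fun _ => ENNReal.ofReal (M * s)) ξ
          + ENNReal.ofReal (s ^ (1 - r)) * ENNReal.ofReal ((1 + ‖ξ‖) ^ r * f ξ)) :=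
        lintegral_mono_ae hpt
      have step2 : (∫⁻ ξ : EuclideanSpace ℝ (Fin 3),
          ((ball (0 : EuclideanSpace ℝ (Fin 3)) s).indicator
            (fun _ => ENNReal.ofReal (M * s)) ξ
          + ENNReal.ofReal (s ^ (1 - r)) * ENNReal.ofReal ((1 + ‖ξ‖) ^ r * f ξ)))
          = ENNReal.ofReal (M * s) * volume (ball (0 : EuclideanSpace ℝ (Fin 3)) s)
            + ENNReal.ofReal (s ^ (1 - r)) * A := by
        rw [lintegral_add_left (measurable_const.indicator measurableSet_ball),
          lintegral_indicator_const measurableSet_ball, lintegral_const_mul _ hgm]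
      have hball : volume (ball (0 : EuclideanSpace ℝ (Fin 3)) s)
          = ENNReal.ofReal (s ^ 3) * V := by
        rw [Measure.addHaar_ball _ _ hs0.le, finrank_euclideanSpace_fin]
      have e1 : ENNReal.ofReal (M * s) * (ENNReal.ofReal (s ^ 3) * V)
          = ENNReal.ofReal (M * t) * V := by
        rw [← mul_assoc, ← ENNReal.ofReal_mul (by positivity)]
        congr 2
        rw [htdef]
        rw [show (4:ℝ) = ((4:ℕ):ℝ) by norm_num, Real.rpow_natCast]
        ring
      have e2 : ENNReal.ofReal (s ^ (1-r)) * A = ENNReal.ofReal (M * t) := by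
        rw [hAa, ← ENNReal.ofReal_mul hsr0.le]
        congr 1
        rw [haMs, htdef, ← mul_assoc, mul_comm (s ^ (1-r)) M, mul_assoc,
          ← Real.rpow_add hs0, show (1:ℝ) - r + (r + 3) = (4:ℝ) by ring]
      calc I ≤ _ := step1
      _ = _ := step2
      _ = ENNReal.ofReal (M * t) * V + ENNReal.ofReal (M * t) := by
          rw [hball, e1, e2]
    have hIle2 : I ≤ ENNReal.ofReal (M * t) * (V + 1) := by
      rw [mul_add, mul_one]; exact hIle
    have hreal : (M * t) ^ p ≤ M ^ (p-1) * a := by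
      have htp : t ^ p ≤ a / M := by
        have : t ^ p = (a / M) ^ (1/(r+3) * 4 * p) := by
          rw [htdef, hsdef, ← Real.rpow_mul haM0.le,
            ← Real.rpow_mul haM0.le, mul_assoc]
        rw [this]
        have h4p : 4 * p ≤ r + 3 := by nlinarith
        calc (a / M) ^ (1/(r+3) * 4 * p) ≤ (a / M) ^ (1:ℝ) := by
              apply Real.rpow_le_rpow_of_exponent_le haM1
              calc 1/(r+3) * 4 * p = (4*p) / (r+3) := by ring
              _ ≤ 1 := by rw [div_le_one (by linarith)]; linarith
        _ = a / M := Real.rpow_one _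
      calc (M * t) ^ p = M ^ p * t ^ p := Real.mul_rpow hM.le ht0.le
      _ ≤ M ^ p * (a / M) := by
          exact mul_le_mul_of_nonneg_left htp (Real.rpow_pos_of_pos hM p).le
      _ = M ^ (p-1) * a := by
          rw [show M ^ p = M ^ (p-1) * M by
            rw [← Real.rpow_add_one hM.ne' (p-1), sub_add_cancel]]
          field_simp
    calc I ^ p ≤ (ENNReal.ofReal (M * t) * (V + 1)) ^ p :=
          ENNReal.rpow_le_rpow hIle2 hp0
    _ = ENNReal.ofReal (M * t) ^ p * (V + 1) ^ p :=
          ENNReal.mul_rpow_of_nonneg _ _ hp0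
    _ ≤ ENNReal.ofReal ((M * t) ^ p) * ENNReal.ofReal C := by
          rw [ENNReal.ofReal_rpow_of_pos (by positivity)]
          exact mul_le_mul_right hCof _
    _ ≤ ENNReal.ofReal (M ^ (p-1) * a) * ENNReal.ofReal C := by
          exact mul_le_mul_left (ENNReal.ofReal_le_ofReal hreal) _
    _ = ENNReal.ofReal C * ENNReal.ofReal (M ^ (p-1)) * A := by
          rw [hAa, ENNReal.ofReal_mul (Real.rpow_pos_of_pos hM _).le]
          ring
end

section
/- Let (X, μ) be a measure space and let f, g : X → ℝ be measurable functions that are strictly positive μ-almost everywhere and integrable, and assume the function x ↦ P(f(x)|g(x)) is integrable. Then ( ∫_X |f − g| dμ )² ≤ 2 · ( ∫_X (f + g) dμ ) · ( ∫_X P(f|g) dμ ). -/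
open MeasureTheory Real

lemma log_le_half (u : ℝ) (hu : 0 < u) : Real.log u ≤ u / 2 := by
  have h1 : Real.log u = 2 * Real.log (Real.sqrt u) := by
    rw [Real.log_sqrt hu.le]; ring
  have h2 : Real.log (Real.sqrt u) ≤ Real.sqrt u - 1 :=
    Real.log_le_sub_one_of_pos (Real.sqrt_pos.2 hu)
  nlinarith [Real.sq_sqrt hu.le, Real.sqrt_nonneg u, sq_nonneg (Real.sqrt u - 2)]

noncomputable def ckpG (t : ℝ) : ℝ := (2 * t + 1) * Real.log t - 2 * t + 2

noncomputable def ckpF (t : ℝ) : ℝ :=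
  2 * (t + 1) * (t * Real.log t + 1 - t) - (t - 1) ^ 2

lemma ckpG_hasDeriv {t : ℝ} (ht : 0 < t) :
    HasDerivAt ckpG (2 * Real.log t + 1 / t) t := by
  have h1 : HasDerivAt (fun t : ℝ => (2 * t + 1) * Real.log t)
      (2 * Real.log t + (2 * t + 1) * t⁻¹) t := by
    have := ((hasDerivAt_id t).const_mul 2 |>.add_const 1).mul (Real.hasDerivAt_log ht.ne')
    refine this.congr_deriv ?_
    simp
  have h2 : HasDerivAt (fun t : ℝ => -2 * t + 2) (-2) t := by
    simpa using ((hasDerivAt_id t).const_mul (-2)).add_const 2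
  have := h1.add h2
  have heq : (fun t : ℝ => (2 * t + 1) * Real.log t + (-2 * t + 2)) = ckpG := by
    funext s; simp [ckpG]; ring
  rw [← heq]
  refine this.congr_deriv ?_
  field_simp
  ring

lemma ckpF_hasDeriv {t : ℝ} (ht : 0 < t) :
    HasDerivAt ckpF (2 * ckpG t) t := by
  have hlog : HasDerivAt (fun t : ℝ => t * Real.log t) (Real.log t + 1) t := by
    have := (hasDerivAt_id t).mul (Real.hasDerivAt_log ht.ne')
    refine this.congr_deriv ?_
    simp [ht.ne']
  have h1 : HasDerivAt (fun t : ℝ => 2 * (t + 1) * (t * Real.log t + 1 - t))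
      (2 * (t * Real.log t + 1 - t) + 2 * (t + 1) * (Real.log t + 1 - 1)) t := by
    have ha : HasDerivAt (fun t : ℝ => 2 * (t + 1)) 2 t := by
      simpa using ((hasDerivAt_id t).add_const 1).const_mul 2
    have hb : HasDerivAt (fun t : ℝ => t * Real.log t + 1 - t) (Real.log t + 1 - 1) t := by
      exact (hlog.add_const 1).sub (hasDerivAt_id t)
    have := ha.mul hb
    exact this
  have h2 : HasDerivAt (fun t : ℝ => (t - 1) ^ 2) (2 * (t - 1)) t := by
    have := ((hasDerivAt_id t).sub_const 1).pow 2
    refine this.congr_deriv ?_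
    simp [id]
  have := h1.sub h2
  have heq : (fun t : ℝ => 2 * (t + 1) * (t * Real.log t + 1 - t) - (t - 1) ^ 2) = ckpF := by
    funext s; simp [ckpF]
  rw [← heq]
  refine this.congr_deriv ?_
  simp [ckpG]; ring

lemma ckpG_deriv_nonneg {t : ℝ} (ht : 0 < t) : 0 ≤ 2 * Real.log t + 1 / t := by
  have h := log_le_half t⁻¹ (inv_pos.2 ht)
  rw [Real.log_inv] at h
  have e : 1 / t = t⁻¹ := one_div t
  linarith

lemma ckpG_nonneg {t : ℝ} (ht : 1 ≤ t) : 0 ≤ ckpG t := by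
  have hmono : MonotoneOn ckpG (Set.Ioi (0 : ℝ)) := by
    apply monotoneOn_of_deriv_nonneg (convex_Ioi 0)
    · exact fun s hs => (ckpG_hasDeriv hs).continuousAt.continuousWithinAt
    · rw [interior_Ioi]
      exact fun s hs => (ckpG_hasDeriv hs).differentiableAt.differentiableWithinAt
    · rw [interior_Ioi]
      intro s hs
      rw [(ckpG_hasDeriv hs).deriv]
      exact ckpG_deriv_nonneg hs
  have h1 : ckpG 1 = 0 := by simp [ckpG]
  have := hmono (Set.mem_Ioi.2 one_pos) (Set.mem_Ioi.2 (lt_of_lt_of_le one_pos ht)) ht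
  linarith

lemma ckpG_nonpos {t : ℝ} (ht : 0 < t) (ht1 : t ≤ 1) : ckpG t ≤ 0 := by
  have hmono : MonotoneOn ckpG (Set.Ioi (0 : ℝ)) := by
    apply monotoneOn_of_deriv_nonneg (convex_Ioi 0)
    · exact fun s hs => (ckpG_hasDeriv hs).continuousAt.continuousWithinAt
    · rw [interior_Ioi]
      exact fun s hs => (ckpG_hasDeriv hs).differentiableAt.differentiableWithinAt
    · rw [interior_Ioi]
      intro s hs
      rw [(ckpG_hasDeriv hs).deriv]
      exact ckpG_deriv_nonneg hs
  have h1 : ckpG 1 = 0 := by simp [ckpG]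
  have := hmono (Set.mem_Ioi.2 ht) (Set.mem_Ioi.2 one_pos) ht1
  linarith

lemma ckpF_nonneg {t : ℝ} (ht : 0 < t) : 0 ≤ ckpF t := by
  have hF1 : ckpF 1 = 0 := by simp [ckpF]
  rcases le_or_gt 1 t with h | h
  · have hmono : MonotoneOn ckpF (Set.Ici (1 : ℝ)) := by
      apply monotoneOn_of_deriv_nonneg (convex_Ici 1)
      · exact fun s hs => (ckpF_hasDeriv (lt_of_lt_of_le one_pos hs)).continuousAt.continuousWithinAt
      · rw [interior_Ici]
        exact fun s hs =>
          (ckpF_hasDeriv (lt_trans one_pos hs)).differentiableAt.differentiableWithinAt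
      · rw [interior_Ici]
        intro s hs
        rw [(ckpF_hasDeriv (lt_trans one_pos hs)).deriv]
        have := ckpG_nonneg (le_of_lt hs)
        linarith
    have := hmono (Set.mem_Ici.2 le_rfl) (Set.mem_Ici.2 h) h
    linarith
  · have hanti : AntitoneOn ckpF (Set.Ioc (0 : ℝ) 1) := by
      apply antitoneOn_of_deriv_nonpos (convex_Ioc 0 1)
      · exact fun s hs => (ckpF_hasDeriv hs.1).continuousAt.continuousWithinAt
      · rw [interior_Ioc]
        exact fun s hs => (ckpF_hasDeriv hs.1).differentiableAt.differentiableWithinAt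
      · rw [interior_Ioc]
        intro s hs
        rw [(ckpF_hasDeriv hs.1).deriv]
        have := ckpG_nonpos hs.1 (le_of_lt hs.2)
        linarith
    have := hanti (Set.mem_Ioc.2 ⟨ht, h.le⟩) (Set.mem_Ioc.2 ⟨one_pos, le_rfl⟩) h.le
    linarith

lemma ckp_core {t : ℝ} (ht : 0 < t) :
    (t - 1) ^ 2 ≤ 2 * (t + 1) * (t * Real.log t + 1 - t) := by
  have := ckpF_nonneg ht
  simp only [ckpF] at this
  linarith

lemma ckp_pointwise {x y : ℝ} (hx : 0 < x) (hy : 0 < y) :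
    (x - y) ^ 2 ≤ 2 * (x + y) * relPressure x y := by
  have h1 : relPressure x y = y * ((x / y) * Real.log (x / y) + 1 - x / y) := by
    rw [relPressure, Real.log_div hx.ne' hy.ne']
    field_simp
    ring
  have h2 := ckp_core (div_pos hx hy)
  have h3 : (x - y) ^ 2 = y ^ 2 * (x / y - 1) ^ 2 := by
    field_simp
  have h4 : 2 * (x + y) * relPressure x y =
      y ^ 2 * (2 * (x / y + 1) * ((x / y) * Real.log (x / y) + 1 - x / y)) := by
    rw [h1]; field_simp
  rw [h3, h4]
  exact mul_le_mul_of_nonneg_left h2 (sq_nonneg y)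

/-- Csiszár–Kullback–Pinsker type inequality:
`(∫ |f - g|)² ≤ 2 (∫ (f + g)) (∫ P(f|g))`. -/
theorem csiszar_kullback_pinsker {X : Type*} [MeasurableSpace X] (μ : Measure X)
    (f g : X → ℝ) (hfm : Measurable f) (hgm : Measurable g)
    (hfpos : ∀ᵐ x ∂μ, 0 < f x) (hgpos : ∀ᵐ x ∂μ, 0 < g x)
    (hfi : Integrable f μ) (hgi : Integrable g μ)
    (hPi : Integrable (fun x => relPressure (f x) (g x)) μ) :
    (∫ x, |f x - g x| ∂μ) ^ 2 ≤
      2 * (∫ x, (f x + g x) ∂μ) * ∫ x, relPressure (f x) (g x) ∂μ := by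
  set a : X → ℝ := fun x => Real.sqrt (f x + g x) with ha_def
  set b : X → ℝ := fun x => |f x - g x| / Real.sqrt (f x + g x) with hb_def
  have ham : Measurable a := (hfm.add hgm).sqrt
  have hbm : Measurable b := ((hfm.sub hgm).abs).div ham
  -- a.e. facts
  have hpos : ∀ᵐ x ∂μ, 0 < f x ∧ 0 < g x := hfpos.and hgpos
  have ha_sq : ∀ᵐ x ∂μ, a x ^ 2 = f x + g x := by
    filter_upwards [hpos] with x hx
    exact Real.sq_sqrt (by linarith [hx.1, hx.2])
  have hb_sq : ∀ᵐ x ∂μ, b x ^ 2 = (f x - g x) ^ 2 / (f x + g x) := by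
    filter_upwards [hpos] with x hx
    have h : (0:ℝ) < f x + g x := by linarith [hx.1, hx.2]
    simp only [hb_def, div_pow, sq_abs, Real.sq_sqrt h.le]
  have hb_sq_le : ∀ᵐ x ∂μ, b x ^ 2 ≤ 2 * relPressure (f x) (g x) := by
    filter_upwards [hpos, hb_sq] with x hx hbx
    have h : (0:ℝ) < f x + g x := by linarith [hx.1, hx.2]
    rw [hbx, div_le_iff₀ h]
    calc (f x - g x) ^ 2 ≤ 2 * (f x + g x) * relPressure (f x) (g x) :=
          ckp_pointwise hx.1 hx.2
      _ = 2 * relPressure (f x) (g x) * (f x + g x) := by ring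
  have hab : ∀ᵐ x ∂μ, a x * b x = |f x - g x| := by
    filter_upwards [hpos] with x hx
    have h : (0:ℝ) < Real.sqrt (f x + g x) := Real.sqrt_pos.2 (by linarith [hx.1, hx.2])
    simp only [ha_def, hb_def]
    field_simp
  -- integrability
  have ha2i : Integrable (fun x => a x ^ 2) μ := (hfi.add hgi).congr (ha_sq.mono fun x h => h.symm)
  have hb2i : Integrable (fun x => b x ^ 2) μ := by
    refine Integrable.mono' (hPi.const_mul 2) ((hbm.pow_const 2).aestronglyMeasurable) ?_
    filter_upwards [hb_sq_le] with x hx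
    rwa [Real.norm_of_nonneg (sq_nonneg _)]
  have haL2 : MemLp a (ENNReal.ofReal 2) μ := by
    have : (ENNReal.ofReal 2) = 2 := by norm_num
    rw [this]
    exact (memLp_two_iff_integrable_sq ham.aestronglyMeasurable).2 ha2i
  have hbL2 : MemLp b (ENNReal.ofReal 2) μ := by
    have : (ENNReal.ofReal 2) = 2 := by norm_num
    rw [this]
    exact (memLp_two_iff_integrable_sq hbm.aestronglyMeasurable).2 hb2i
  have ha_nn : 0 ≤ᵐ[μ] a := Filter.Eventually.of_forall fun x => Real.sqrt_nonneg _
  have hb_nn : 0 ≤ᵐ[μ] b := Filter.Eventually.of_forall fun x =>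
    div_nonneg (abs_nonneg _) (Real.sqrt_nonneg _)
  have hCS := integral_mul_le_Lp_mul_Lq_of_nonneg Real.HolderConjugate.two_two
    ha_nn hb_nn haL2 hbL2
  -- rewrite the Cauchy-Schwarz inequality
  have hIab : ∫ x, a x * b x ∂μ = ∫ x, |f x - g x| ∂μ := integral_congr_ae hab
  have hIa : ∫ x, a x ^ (2:ℝ) ∂μ = ∫ x, (f x + g x) ∂μ := by
    simp_rw [Real.rpow_two]
    exact integral_congr_ae ha_sq
  have hIb_le : ∫ x, b x ^ (2:ℝ) ∂μ ≤ 2 * ∫ x, relPressure (f x) (g x) ∂μ := by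
    simp_rw [Real.rpow_two]
    calc ∫ x, b x ^ 2 ∂μ ≤ ∫ x, 2 * relPressure (f x) (g x) ∂μ :=
          integral_mono_ae hb2i (hPi.const_mul 2) hb_sq_le
      _ = 2 * ∫ x, relPressure (f x) (g x) ∂μ := integral_const_mul 2 _
  have hIa_nn : 0 ≤ ∫ x, a x ^ (2:ℝ) ∂μ :=
    integral_nonneg fun x => Real.rpow_nonneg (Real.sqrt_nonneg _) _
  have hIb_nn : 0 ≤ ∫ x, b x ^ (2:ℝ) ∂μ :=
    integral_nonneg fun x => Real.rpow_nonneg (div_nonneg (abs_nonneg _) (Real.sqrt_nonneg _)) _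
  have hfg_nn : 0 ≤ ∫ x, (f x + g x) ∂μ := by rw [← hIa]; exact hIa_nn
  have hA_nn : 0 ≤ ∫ x, |f x - g x| ∂μ := integral_nonneg fun x => abs_nonneg _
  have hsq : ((∫ x, a x ^ (2:ℝ) ∂μ) ^ ((1:ℝ)/2) * (∫ x, b x ^ (2:ℝ) ∂μ) ^ ((1:ℝ)/2)) ^ 2
      = (∫ x, a x ^ (2:ℝ) ∂μ) * (∫ x, b x ^ (2:ℝ) ∂μ) := by
    rw [mul_pow, ← Real.rpow_natCast ((∫ x, a x ^ (2:ℝ) ∂μ) ^ ((1:ℝ)/2)) 2,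
      ← Real.rpow_natCast ((∫ x, b x ^ (2:ℝ) ∂μ) ^ ((1:ℝ)/2)) 2,
      ← Real.rpow_mul hIa_nn, ← Real.rpow_mul hIb_nn]
    norm_num
  have h1 : (∫ x, |f x - g x| ∂μ) ^ 2
      ≤ (∫ x, a x ^ (2:ℝ) ∂μ) * (∫ x, b x ^ (2:ℝ) ∂μ) := by
    rw [← hsq, ← hIab]
    exact pow_le_pow_left₀ (hIab ▸ hA_nn) hCS 2
  have h2 : (∫ x, a x ^ (2:ℝ) ∂μ) * (∫ x, b x ^ (2:ℝ) ∂μ)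
      ≤ (∫ x, (f x + g x) ∂μ) * (2 * ∫ x, relPressure (f x) (g x) ∂μ) := by
    rw [← hIa]
    exact mul_le_mul_of_nonneg_left hIb_le hIa_nn
  calc (∫ x, |f x - g x| ∂μ) ^ 2
      ≤ (∫ x, (f x + g x) ∂μ) * (2 * ∫ x, relPressure (f x) (g x) ∂μ) := le_trans h1 h2
    _ = 2 * (∫ x, (f x + g x) ∂μ) * ∫ x, relPressure (f x) (g x) ∂μ := by ring
end

section
/- Let (X, μ) be a measure space, let γ be a real number with 1 < γ ≤ 2, and let a, b : X → ℝ be measurable functions that are strictly positive μ-almost everywhere. Then ∫_X |a − b|^γ dμ ≤ ( ∫_X min{a^{γ−2}, b^{γ−2}}·(a − b)² dμ )^{γ/2} · ( ∫_X max{a^γ, b^γ} dμ )^{(2−γ)/2}, where all integrals take values in [0, ∞]. -/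
open MeasureTheory Real
open scoped ENNReal

private lemma ptwise_key {γ : ℝ} (hγ1 : 0 < γ) (hγ2 : γ ≤ 2) {a b : ℝ} (ha : 0 < a)
    (hb : 0 < b) :
    (min (a ^ (γ - 2)) (b ^ (γ - 2)) * (a - b) ^ 2) ^ (γ / 2) *
      (max (a ^ γ) (b ^ γ)) ^ ((2 - γ) / 2) = |a - b| ^ γ := by
  set m := max a b with hm
  have hm0 : 0 < m := lt_max_of_lt_left ha
  have h1 : min (a ^ (γ - 2)) (b ^ (γ - 2)) = m ^ (γ - 2) := by
    rcases le_total a b with h | h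
    · rw [hm, max_eq_right h, min_eq_right (Real.rpow_le_rpow_of_nonpos ha h (by linarith))]
    · rw [hm, max_eq_left h, min_eq_left (Real.rpow_le_rpow_of_nonpos hb h (by linarith))]
  have h2 : max (a ^ γ) (b ^ γ) = m ^ γ := by
    rcases le_total a b with h | h
    · rw [hm, max_eq_right h, max_eq_right (Real.rpow_le_rpow ha.le h hγ1.le)]
    · rw [hm, max_eq_left h, max_eq_left (Real.rpow_le_rpow hb.le h hγ1.le)]
  have habs : (a - b) ^ 2 = |a - b| ^ (2 : ℝ) := by
    rw [← sq_abs, ← Real.rpow_natCast |a - b| 2]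
    norm_num
  rw [h1, h2, habs,
    Real.mul_rpow (Real.rpow_nonneg hm0.le _) (Real.rpow_nonneg (abs_nonneg _) _),
    ← Real.rpow_mul hm0.le, ← Real.rpow_mul (abs_nonneg _), ← Real.rpow_mul hm0.le]
  have e1 : (2 : ℝ) * (γ / 2) = γ := by ring
  rw [e1, mul_right_comm, ← Real.rpow_add hm0]
  have e2 : (γ - 2) * (γ / 2) + γ * ((2 - γ) / 2) = 0 := by ring
  rw [e2, Real.rpow_zero, one_mul]

/-- Hölder-type estimate converting relative-entropy control into an `L^γ` distance:
for `1 < γ ≤ 2` and a.e. positive measurable `a, b`,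
`∫ |a - b|^γ ≤ (∫ min{a^(γ-2), b^(γ-2)} (a - b)²)^(γ/2) (∫ max{a^γ, b^γ})^((2-γ)/2)`. -/
theorem lgamma_distance_bound {X : Type*} [MeasurableSpace X] (μ : Measure X)
    (γ : ℝ) (hγ1 : 1 < γ) (hγ2 : γ ≤ 2)
    (a b : X → ℝ) (ham : Measurable a) (hbm : Measurable b)
    (hapos : ∀ᵐ x ∂μ, 0 < a x) (hbpos : ∀ᵐ x ∂μ, 0 < b x) :
    ∫⁻ x, ENNReal.ofReal (|a x - b x| ^ γ) ∂μ ≤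
      (∫⁻ x, ENNReal.ofReal
          (min (a x ^ (γ - 2)) (b x ^ (γ - 2)) * (a x - b x) ^ 2) ∂μ) ^ (γ / 2) *
        (∫⁻ x, ENNReal.ofReal (max (a x ^ γ) (b x ^ γ)) ∂μ) ^ ((2 - γ) / 2) := by
  have hγ0 : (0 : ℝ) < γ := by linarith
  rcases eq_or_lt_of_le hγ2 with hEq | hlt
  · -- γ = 2
    subst hEq
    norm_num
  · -- γ < 2
    set F : X → ℝ≥0∞ := fun x =>
      ENNReal.ofReal (min (a x ^ (γ - 2)) (b x ^ (γ - 2)) * (a x - b x) ^ 2) with hF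
    set G : X → ℝ≥0∞ := fun x => ENNReal.ofReal (max (a x ^ γ) (b x ^ γ)) with hG
    have hFm : Measurable F :=
      (((ham.pow_const _ |>.min (hbm.pow_const _))).mul
        ((ham.sub hbm).pow measurable_const)).ennreal_ofReal
    have hGm : Measurable G := ((ham.pow_const _).max (hbm.pow_const _)).ennreal_ofReal
    have hpq : Real.HolderConjugate (2 / γ) (2 / (2 - γ)) := by
      constructor
      · rw [inv_div, inv_div, inv_one]; ring
      · positivity
      · have : 0 < 2 - γ := by linarith
        positivity
    have key : ∫⁻ x, ENNReal.ofReal (|a x - b x| ^ γ) ∂μ =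
        ∫⁻ x, ((fun x => F x ^ (γ / 2)) * fun x => G x ^ ((2 - γ) / 2)) x ∂μ := by
      refine lintegral_congr_ae ?_
      filter_upwards [hapos, hbpos] with x hax hbx
      simp only [hF, hG, Pi.mul_apply]
      rw [ENNReal.ofReal_rpow_of_nonneg
          (mul_nonneg (le_min (Real.rpow_nonneg hax.le _) (Real.rpow_nonneg hbx.le _))
            (sq_nonneg _)) (by positivity),
        ENNReal.ofReal_rpow_of_nonneg (le_max_of_le_left (Real.rpow_nonneg hax.le _))
          (by linarith),
        ← ENNReal.ofReal_mul (by positivity), ptwise_key hγ0 hγ2 hax hbx]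
    rw [key]
    have := ENNReal.lintegral_mul_le_Lp_mul_Lq μ hpq
      ((hFm.pow_const (γ / 2)).aemeasurable) ((hGm.pow_const ((2 - γ) / 2)).aemeasurable)
    refine this.trans (le_of_eq ?_)
    have m1 : γ / 2 * (2 / γ) = 1 := by field_simp
    have m2 : (2 - γ) / 2 * (2 / (2 - γ)) = 1 := by
      rw [div_mul_div_comm, mul_comm, div_self (by nlinarith)]
    have e1 : ∀ x, (F x ^ (γ / 2)) ^ (2 / γ) = F x := fun x => by
      rw [← ENNReal.rpow_mul, m1, ENNReal.rpow_one]
    have e2 : ∀ x, (G x ^ ((2 - γ) / 2)) ^ (2 / (2 - γ)) = G x := fun x => by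
      rw [← ENNReal.rpow_mul, m2, ENNReal.rpow_one]
    simp only [e1, e2, one_div, inv_div]
end
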